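/- Let S and T be inverse semigroups and let U : PSh(L(S)) → PSh(L(T)) be an equivalence of categories. Let b ≤ d be idempotents of S (i.e. b = bd), let e be an idempotent of T, and let x : y(e) ≅ U(y(d)) be an isomorphism in PSh(L(T)), where y denotes the Yoneda embedding. Then there exist a unique idempotent a of T with a ≤ e (i.e. a = ae) and a unique isomorphism z : y(a) ≅ U(y(b)) such that the square with top edge z, bottom edge x, left edge y(e,a) : y(a) → y(e) and right edge U(y(d,b)) : U(y(b)) → U(y(d)) is a pullback square in PSh(L(T)). -/

import Mathlib

universe u

open CategoryTheory

/-- An inverse semigroup: every element has a unique (von Neumann) inverse,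
selected by `star`. -/
class InverseSemigroup (S : Type u) extends Semigroup S where
  star : S → S
  mul_star_mul : ∀ s : S, s * star s * s = s
  star_mul_star : ∀ s : S, star s * s * star s = star s
  star_unique : ∀ s t : S, s * t * s = s → t * s * t = t → t = star s

namespace InverseSemigroup

variable {S : Type u} [InverseSemigroup S]

theorem star_star (s : S) : star (star s) = s :=
  (star_unique (star s) s (star_mul_star s) (mul_star_mul s)).symm

theorem star_idem {e : S} (he : e * e = e) : star e = e :=
  (star_unique e e (by rw [he, he]) (by rw [he, he])).symm

theorem mul_idem {e f : S} (he : e * e = e) (hf : f * f = f) :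
    (e * f) * (e * f) = e * f := by
  set x := star (e * f) with hx
  have hxfix : (e * f) * x * (e * f) = e * f := mul_star_mul (e * f)
  have hxfix' : x * (e * f) * x = x := star_mul_star (e * f)
  have he1 : ∀ y : S, e * (e * y) = e * y := fun y => by rw [← mul_assoc, he]
  have hf1 : ∀ y : S, f * (f * y) = f * y := fun y => by rw [← mul_assoc, hf]
  have A : e * (f * (x * (e * f))) = e * f := by
    simpa only [mul_assoc] using hxfix
  have B1 : ∀ y : S, x * (e * (f * (x * y))) = x * y := fun y => by
    have h := congrArg (· * y) hxfix'
    simpa only [mul_assoc] using h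
  have h1 : (e * f) * (f * x * e) * (e * f) = e * f := by
    simp only [mul_assoc, hf1, he1]
    exact A
  have h2 : (f * x * e) * (e * f) * (f * x * e) = f * x * e := by
    simp only [mul_assoc, he1, hf1, B1]
  have hC : f * x * e = x := by
    have := star_unique (e * f) (f * x * e) h1 h2
    rwa [← hx] at this
  have hCn : f * (x * e) = x := by simpa only [mul_assoc] using hC
  have key : (f * (x * e)) * (f * (x * e)) = f * (x * e) := by
    simp only [mul_assoc, B1]
  have hD : x * x = x := by rw [← hCn]; exact key
  have hE : e * f = x := (star_unique x (e * f) hxfix' hxfix).trans (star_idem hD)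
  rw [hE]; exact hD

theorem idem_comm {e f : S} (he : e * e = e) (hf : f * f = f) :
    e * f = f * e := by
  have hef : (e * f) * (e * f) = e * f := mul_idem he hf
  have hfe : (f * e) * (f * e) = f * e := mul_idem hf he
  have he1 : ∀ y : S, e * (e * y) = e * y := fun y => by rw [← mul_assoc, he]
  have hf1 : ∀ y : S, f * (f * y) = f * y := fun y => by rw [← mul_assoc, hf]
  have hefn : e * (f * (e * f)) = e * f := by simpa only [mul_assoc] using hef
  have hfen : f * (e * (f * e)) = f * e := by simpa only [mul_assoc] using hfe
  have h1 : (e * f) * (f * e) * (e * f) = e * f := by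
    simp only [mul_assoc, hf1, he1]
    exact hefn
  have h2 : (f * e) * (e * f) * (f * e) = f * e := by
    simp only [mul_assoc, he1, hf1]
    exact hfen
  have := star_unique (e * f) (f * e) h1 h2
  rw [this, star_idem hef]

theorem star_mul (a b : S) : star (a * b) = star b * star a := by
  set u := star a with hu
  set v := star b with hv
  have han : a * (u * a) = a := by simpa only [mul_assoc] using mul_star_mul a
  have hun : u * (a * u) = u := by simpa only [mul_assoc] using star_mul_star a
  have hbn : b * (v * b) = b := by simpa only [mul_assoc] using mul_star_mul b
  have hvn : v * (b * v) = v := by simpa only [mul_assoc] using star_mul_star b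
  have ha1 : ∀ y : S, a * (u * (a * y)) = a * y := fun y => by
    have h := congrArg (· * y) (mul_star_mul a); simpa only [mul_assoc] using h
  have hv1 : ∀ y : S, v * (b * (v * y)) = v * y := fun y => by
    have h := congrArg (· * y) (star_mul_star b); simpa only [mul_assoc] using h
  have hua : (u * a) * (u * a) = u * a := by
    simp only [mul_assoc]; rw [han]
  have hbv : (b * v) * (b * v) = b * v := by
    simp only [mul_assoc]; rw [hvn]
  have hc : (b * v) * (u * a) = (u * a) * (b * v) := idem_comm hbv hua
  have hc1 : ∀ y : S, b * (v * (u * (a * y))) = u * (a * (b * (v * y))) := fun y => by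
    have h := congrArg (· * y) hc; simpa only [mul_assoc] using h
  have goal1 : (a * b) * (v * u) * (a * b) = a * b := by
    simp only [mul_assoc]
    rw [hc1, ha1, hbn]
  have goal2 : (v * u) * (a * b) * (v * u) = v * u := by
    simp only [mul_assoc]
    rw [← hc1, hv1, hun]
  exact ((star_unique (a * b) (v * u) goal1 goal2)).symm

theorem star_mul_self_idem (s : S) : (star s * s) * (star s * s) = star s * s := by
  have h := congrArg (star s * ·) (mul_star_mul s)
  simpa only [mul_assoc] using h

theorem mul_star_self_idem (s : S) : (s * star s) * (s * star s) = s * star s := by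
  have h := congrArg (· * star s) (mul_star_mul s)
  simpa only [mul_assoc] using h

end InverseSemigroup

open InverseSemigroup

/-- The left-cancellative category `L(S)` of an inverse semigroup `S`: objects are
the idempotents, and a morphism `f ⟶ e` is an element `s` with `e * s = s` and
`s* * s = f`; composition is multiplication. -/
def LCat (S : Type u) [InverseSemigroup S] : Type u := {e : S // e * e = e}

namespace LCat

variable {S : Type u} [InverseSemigroup S]

instance : Category.{u} (LCat S) where
  Hom f e := {s : S // e.1 * s = s ∧ star s * s = f.1}
  id e := ⟨e.1, by rw [e.2], by rw [star_idem e.2, e.2]⟩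
  comp := fun {f g e} u v => ⟨v.1 * u.1, by
      constructor
      · rw [← mul_assoc, v.2.1]
      · calc star (v.1 * u.1) * (v.1 * u.1)
            = star u.1 * ((star v.1 * v.1) * u.1) := by
              rw [InverseSemigroup.star_mul]; simp only [mul_assoc]
          _ = star u.1 * (g.1 * u.1) := by rw [v.2.2]
          _ = star u.1 * u.1 := by rw [u.2.1]
          _ = f.1 := u.2.2⟩
  id_comp := fun {f e} u => by
    apply Subtype.ext
    show u.1 * f.1 = u.1
    have h2 := u.2.2
    calc u.1 * f.1 = u.1 * (star u.1 * u.1) := by rw [h2]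
      _ = u.1 := by rw [← mul_assoc, mul_star_mul]
  comp_id := fun {f e} u => by
    apply Subtype.ext
    show e.1 * u.1 = u.1
    exact u.2.1
  assoc := fun u v w => Subtype.ext (mul_assoc w.1 v.1 u.1).symm

end LCat

/-- The object of `L(S)` attached to an idempotent. -/
def LCat.mk {S : Type u} [InverseSemigroup S] (e : S) (he : e * e = e) : LCat S :=
  ⟨e, he⟩

/-- The morphism `(e,a) : a ⟶ e` of `L(S)` attached to an inequality `a ≤ e`
of idempotents. -/
def LCat.homOfLe {S : Type u} [InverseSemigroup S] {a e : S}
    (ha : a * a = a) (he : e * e = e) (h : a * e = a) :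
    LCat.mk a ha ⟶ LCat.mk e he :=
  ⟨a, by show e * a = a; rw [idem_comm he ha]; exact h,
    by show star a * a = a; rw [star_idem ha]; exact ha⟩

section Aux

open Opposite CategoryTheory.Limits

variable {T : Type u} [InverseSemigroup T]

/-- Morphisms in `L(T)` are left-cancellable. -/
theorem LCat.hom_left_cancel {f g h : LCat T} (u : f ⟶ g) (v w : h ⟶ f)
    (huv : v ≫ u = w ≫ u) : v = w := by
  apply Subtype.ext
  have hval : u.1 * v.1 = u.1 * w.1 := congrArg Subtype.val huv
  have h1 : star u.1 * (u.1 * v.1) = star u.1 * (u.1 * w.1) := congrArg _ hval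
  have h2 : ∀ y : h ⟶ f, star u.1 * (u.1 * y.1) = y.1 := fun y => by
    rw [← mul_assoc, u.2.2, y.2.1]
  rwa [h2 v, h2 w] at h1

/-- The Yoneda embedding sends every morphism of `L(T)` to a monomorphism. -/
theorem LCat.yoneda_map_mono {f g : LCat T} (u : f ⟶ g) : Mono (yoneda.map u) := by
  constructor
  intro Z α β hαβ
  ext X v
  have := congrArg (fun (γ : Z ⟶ yoneda.obj g) => γ.app X v) hαβ
  simp only [FunctorToTypes.comp, yoneda_map_app] at this
  exact LCat.hom_left_cancel u _ _ this

/-- The image of a representable presheaf under an equivalence of presheaf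
categories receives a split epimorphism from a representable presheaf. -/
theorem exists_section_of_equivalence
    {C D : Type u} [Category.{u} C] [Category.{u} D]
    (U : (Cᵒᵖ ⥤ Type u) ⥤ (Dᵒᵖ ⥤ Type u)) [U.IsEquivalence] (b : C) :
    ∃ (c : D) (ξ : (U.obj (yoneda.obj b)).obj (Opposite.op c))
      (s : U.obj (yoneda.obj b) ⟶ yoneda.obj c),
      s ≫ yonedaEquiv.symm ξ = 𝟙 (U.obj (yoneda.obj b)) := by
  set W := U.obj (yoneda.obj b) with hWdef
  let V : (Dᵒᵖ ⥤ Type u) ⥤ (Cᵒᵖ ⥤ Type u) := U.asEquivalence.inverse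
  let adj : U ⊣ V := U.asEquivalence.toAdjunction
  -- the natural bijection `Hom(W, G) ≃ (V G)(b)`
  let Φ : ∀ (G : Dᵒᵖ ⥤ Type u), (W ⟶ G) → (V.obj G).obj (op b) :=
    fun G φ => yonedaEquiv (adj.homEquiv (yoneda.obj b) G φ)
  let Ψ : ∀ (G : Dᵒᵖ ⥤ Type u), (V.obj G).obj (op b) → (W ⟶ G) :=
    fun G τ => (adj.homEquiv (yoneda.obj b) G).symm (yonedaEquiv.symm τ)
  have hΦΨ : ∀ (G : Dᵒᵖ ⥤ Type u) (τ : (V.obj G).obj (op b)), Φ G (Ψ G τ) = τ := by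
    intro G τ
    simp only [Φ, Ψ, Equiv.apply_symm_apply]
  have hΨΦ : ∀ (G : Dᵒᵖ ⥤ Type u) (φ : W ⟶ G), Ψ G (Φ G φ) = φ := by
    intro G φ
    simp only [Φ, Ψ, Equiv.symm_apply_apply]
  have hΦnat : ∀ {G G' : Dᵒᵖ ⥤ Type u} (φ : W ⟶ G) (g : G ⟶ G'),
      Φ G' (φ ≫ g) = (V.map g).app (op b) (Φ G φ) := by
    intro G G' φ g
    simp only [Φ]
    rw [Adjunction.homEquiv_naturality_right, yonedaEquiv_comp]
  -- the canonical epimorphism from a coproduct of representables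
  let I : Type u := Σ c : D, W.obj (op c)
  let F : I → (Dᵒᵖ ⥤ Type u) := fun i => yoneda.obj i.1
  let P : Dᵒᵖ ⥤ Type u := ∐ F
  let π : P ⟶ W := Sigma.desc (fun i => yonedaEquiv.symm i.2)
  have hπι : ∀ i : I, Sigma.ι F i ≫ π = yonedaEquiv.symm i.2 := fun i =>
    Sigma.ι_desc _ _
  have hπepi : Epi π := by
    rw [NatTrans.epi_iff_epi_app]
    intro X
    rw [epi_iff_surjective]
    intro ξ
    refine ⟨(Sigma.ι F ⟨X.unop, ξ⟩).app X (𝟙 X.unop), ?_⟩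
    have := congrArg (fun (γ : F ⟨X.unop, ξ⟩ ⟶ W) => γ.app X (𝟙 X.unop))
      (hπι ⟨X.unop, ξ⟩)
    simp only [FunctorToTypes.comp] at this
    rw [this]; show W.map (𝟙 X.unop).op ξ = ξ
    simp
  -- a section of `π` out of `W`, by projectivity of `W`
  haveI : Epi (V.map π) := inferInstance
  haveI : Epi ((V.map π).app (op b)) := inferInstance
  obtain ⟨σ', hσ'⟩ := (epi_iff_surjective ((V.map π).app (op b))).1 inferInstance
    (Φ W (𝟙 W))
  have hsπ : Ψ P σ' ≫ π = 𝟙 W := by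
    have : Φ W (Ψ P σ' ≫ π) = Φ W (𝟙 W) := by
      rw [hΦnat, hΦΨ]; exact hσ'
    have h2 := congrArg (Ψ W) this
    rwa [hΨΦ, hΨΦ] at h2
  -- `W` is connected: the section factors through a single summand
  let ev : (Cᵒᵖ ⥤ Type u) ⥤ Type u := (evaluation Cᵒᵖ (Type u)).obj (op b)
  have hc : IsColimit ((V ⋙ ev).mapCocone (colimit.cocone (Discrete.functor F))) :=
    isColimitOfPreserves (V ⋙ ev) (colimit.isColimit _)
  obtain ⟨j, y, hy⟩ := Types.jointly_surjective _ hc σ'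
  refine ⟨j.as.1, j.as.2, Ψ (F j.as) y, ?_⟩
  have hfact : Ψ P σ' = Ψ (F j.as) y ≫ Sigma.ι F j.as := by
    have : Φ P (Ψ (F j.as) y ≫ Sigma.ι F j.as) = σ' := by
      rw [hΦnat, hΦΨ]
      exact hy
    have h2 := congrArg (Ψ P) this
    rw [hΨΦ] at h2
    exact h2.symm
  have := hsπ
  rw [hfact, Category.assoc, hπι j.as] at this
  exact this

end Aux

/-- Given an equivalence `U : PSh(L(S)) ≃ PSh(L(T))`, idempotents `b ≤ d` of `S`,
an idempotent `e` of `T` and an isomorphism `x : y(e) ≅ U(y(d))`, there are a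
unique idempotent `a ≤ e` of `T` and a unique isomorphism `z : y(a) ≅ U(y(b))`
making the square with sides `z`, `y(e,a)`, `U(y(d,b))`, `x` a pullback. -/
theorem unique_pullback_restriction
    (S T : Type u) [InverseSemigroup S] [InverseSemigroup T]
    (U : ((LCat S)ᵒᵖ ⥤ Type u) ⥤ ((LCat T)ᵒᵖ ⥤ Type u)) [U.IsEquivalence]
    (b d : S) (hb : b * b = b) (hd : d * d = d) (hbd : b * d = b)
    (e : T) (he : e * e = e)
    (x : yoneda.obj (LCat.mk e he) ≅ U.obj (yoneda.obj (LCat.mk d hd))) :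
    ∃ (a : T) (ha : a * a = a) (hae : a * e = a)
      (z : yoneda.obj (LCat.mk a ha) ≅ U.obj (yoneda.obj (LCat.mk b hb))),
      IsPullback z.hom (yoneda.map (LCat.homOfLe ha he hae))
        (U.map (yoneda.map (LCat.homOfLe hb hd hbd))) x.hom ∧
      ∀ (a' : T) (ha' : a' * a' = a') (hae' : a' * e = a')
        (z' : yoneda.obj (LCat.mk a' ha') ≅ U.obj (yoneda.obj (LCat.mk b hb))),
        IsPullback z'.hom (yoneda.map (LCat.homOfLe ha' he hae'))
          (U.map (yoneda.map (LCat.homOfLe hb hd hbd))) x.hom →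
        a' = a ∧ HEq z' z := by
  classical
  obtain ⟨c, ξ, s₀, hs₀⟩ := exists_section_of_equivalence U (LCat.mk b hb)
  set σ := yonedaEquiv.symm ξ with hσdef
  set Ump := U.map (yoneda.map (LCat.homOfLe hb hd hbd)) with hUmpdef
  -- the morphism `t : c ⟶ e` in `L(T)` underlying `σ ≫ Ump ≫ x.inv`
  set t : c ⟶ LCat.mk e he := yonedaEquiv (σ ≫ Ump ≫ x.inv) with htdef
  have ht : yoneda.map t = σ ≫ Ump ≫ x.inv := by
    apply yonedaEquiv.injective
    rw [yonedaEquiv_yoneda_map]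
  -- `σ` is an isomorphism
  haveI : Mono (yoneda.map t) := LCat.yoneda_map_mono t
  haveI : Mono (σ ≫ (Ump ≫ x.inv)) := by
    rw [show σ ≫ (Ump ≫ x.inv) = yoneda.map t from ht.symm]
    exact LCat.yoneda_map_mono t
  haveI hmσ : Mono σ := mono_of_mono σ (Ump ≫ x.inv)
  have hσs₀ : σ ≫ s₀ = 𝟙 _ := by
    rw [← cancel_mono σ, Category.assoc, hs₀, Category.comp_id, Category.id_comp]
  haveI hiσ : IsIso σ := ⟨s₀, hσs₀, hs₀⟩
  -- facts about the element `t.1` of `T`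
  have htc : star t.1 * t.1 = c.1 := t.2.2
  have hte : e * t.1 = t.1 := t.2.1
  have hste : star t.1 * e = star t.1 := by
    have key : ∀ u : T, e * u = u → star u * e = star u := by
      intro u hu
      calc star u * e = star u * star e := by rw [star_idem he]
        _ = star (e * u) := (InverseSemigroup.star_mul e u).symm
        _ = star u := by rw [hu]
    exact key t.1 hte
  -- the idempotent `a := t t*`
  set a : T := t.1 * star t.1 with hadef
  have ha : a * a = a := mul_star_self_idem t.1
  have hae : a * e = a := by
    show t.1 * star t.1 * e = t.1 * star t.1
    rw [mul_assoc, hste]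
  -- the isomorphism `g : a ≅ c` in `L(T)`
  let g : LCat.mk a ha ⟶ c :=
    ⟨star t.1, by
      have h5 := congrArg (fun y => y * star t.1) htc
      exact h5.symm.trans (star_mul_star t.1), by
      show star (star t.1) * star t.1 = t.1 * star t.1
      rw [InverseSemigroup.star_star]⟩
  let ginv : c ⟶ LCat.mk a ha :=
    ⟨t.1, by show t.1 * star t.1 * t.1 = t.1; exact mul_star_mul t.1, htc⟩
  have hg1 : g ≫ ginv = 𝟙 (LCat.mk a ha) := Subtype.ext rfl
  have hg2 : ginv ≫ g = 𝟙 c := Subtype.ext htc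
  haveI : IsIso g := ⟨ginv, hg1, hg2⟩
  -- `g ≫ t` is the canonical inclusion `a ⟶ e`
  have hgt : g ≫ t = LCat.homOfLe ha he hae := Subtype.ext rfl
  -- the isomorphism `z`
  haveI : IsIso (yoneda.map g ≫ σ) := inferInstance
  refine ⟨a, ha, hae, asIso (yoneda.map g ≫ σ), ?_, ?_⟩
  · -- the pullback square
    have hcomm : (asIso (yoneda.map g ≫ σ)).hom ≫ Ump =
        yoneda.map (LCat.homOfLe ha he hae) ≫ x.hom := by
      show (yoneda.map g ≫ σ) ≫ Ump = _
      rw [← hgt, Functor.map_comp, Category.assoc, Category.assoc]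
      congr 1
      rw [ht, Category.assoc, Category.assoc, Iso.inv_hom_id, Category.comp_id]
    exact IsPullback.of_horiz_isIso ⟨hcomm⟩
  · -- uniqueness
    set z := asIso (yoneda.map g ≫ σ) with hzdef
    have hz : z.hom ≫ Ump = yoneda.map (LCat.homOfLe ha he hae) ≫ x.hom := by
      show (yoneda.map g ≫ σ) ≫ Ump = _
      rw [← hgt, Functor.map_comp, Category.assoc, Category.assoc]
      congr 1
      rw [ht, Category.assoc, Category.assoc, Iso.inv_hom_id, Category.comp_id]
    intro a' ha' hae' z' hpb'
    have hz' : z'.hom ≫ Ump = yoneda.map (LCat.homOfLe ha' he hae') ≫ x.hom :=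
      hpb'.w
    -- compare the two squares
    have E : yoneda.map (LCat.homOfLe ha' he hae') =
        (z'.hom ≫ z.inv) ≫ yoneda.map (LCat.homOfLe ha he hae) := by
      rw [← cancel_mono x.hom, ← hz', Category.assoc, Category.assoc, ← hz]
      rw [← Category.assoc z.inv, Iso.inv_hom_id, Category.id_comp]
    -- the comparison morphism in `L(T)`
    let g' : LCat.mk a' ha' ⟶ LCat.mk a ha := yoneda.preimage (z'.hom ≫ z.inv)
    have hg' : yoneda.map g' = z'.hom ≫ z.inv := Functor.map_preimage _ _
    have hg't : g' ≫ LCat.homOfLe ha he hae = LCat.homOfLe ha' he hae' := by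
      apply yoneda.map_injective
      rw [Functor.map_comp, hg', ← E]
    haveI : IsIso (yoneda.map g') := by rw [hg']; infer_instance
    haveI : IsIso g' := isIso_of_fully_faithful yoneda g'
    -- compute with values to get `a' = a`
    have hg'v : a * g'.1 = g'.1 := g'.2.1
    have hval : a * g'.1 = a' := congrArg Subtype.val hg't
    have hg'a : g'.1 = a' := by rw [← hg'v, hval]
    have hinv1 : (inv g').1 * g'.1 = a' :=
      congrArg Subtype.val (IsIso.hom_inv_id g')
    have hinv2 : g'.1 * (inv g').1 = a :=
      congrArg Subtype.val (IsIso.inv_hom_id g')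
    have hinvv : a' * (inv g').1 = (inv g').1 := (inv g').2.1
    have key : ∀ p q gv iv : T, p * p = p → q * q = q → gv = q → iv * gv = q →
        gv * iv = p → q * iv = iv → q = p := by
      intro p q gv iv hp hq h1 h2 h3 h4
      rw [h1] at h2 h3
      have hiv : iv = p := h4.symm.trans h3
      rw [hiv] at h2 h3
      calc q = p * q := h2.symm
        _ = q * p := idem_comm hp hq
        _ = p := h3
    have heqa : a' = a :=
      key a a' g'.1 (inv g').1 ha ha' hg'a hinv1 hinv2 hinvv
    subst heqa
    refine ⟨rfl, ?_⟩
    -- now identify the isomorphisms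
    have hle : LCat.homOfLe ha' he hae' = LCat.homOfLe ha he hae := rfl
    haveI : Mono (yoneda.map (LCat.homOfLe ha he hae)) :=
      LCat.yoneda_map_mono _
    have hid : z'.hom ≫ z.inv = 𝟙 _ := by
      rw [← cancel_mono (yoneda.map (LCat.homOfLe ha he hae)), Category.id_comp,
        ← E, hle]
    have hzz : z'.hom = z.hom := by
      have := congrArg (fun u => u ≫ z.hom) hid
      simpa [Category.assoc] using this
    exact heq_of_eq (Iso.ext hzz)
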